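/- If λ = β = 1/2, then the non-unital associative subalgebra of the 4×4 real matrices generated by {l_o, l_a, l_b} equals M₀, the subspace of matrices whose only possibly nonzero entries are at positions (1,1), (2,1), (2,2), (3,1), (3,3), (4,1), (4,2), (4,3). -/

import Mathlib

/-- The matrix of left multiplication by `o` in `B'(l, β)` in the ordered basis
`(o, a, b, ab)`: `l_o = E₁₁ + l·E₂₂ + l·E₃₃`. -/
noncomputable def lMo (l β : ℝ) : Matrix (Fin 4) (Fin 4) ℝ :=
  !![1, 0, 0, 0;
     0, l, 0, 0;
     0, 0, l, 0;
     0, 0, 0, 0]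

/-- The matrix of left multiplication by `a` in `B'(l, β)`:
`l_a = l·E₂₁ + E₂₂ + ((l-β)/l)·E₂₃ + ((l+β-1)/l)·E₃₃ + E₄₃`. -/
noncomputable def lMa (l β : ℝ) : Matrix (Fin 4) (Fin 4) ℝ :=
  !![0, 0, 0, 0;
     l, 1, (l - β) / l, 0;
     0, 0, (l + β - 1) / l, 0;
     0, 0, 1, 0]

/-- The matrix of left multiplication by `b` in `B'(l, β)`:
`l_b = ((l-β)/l)·E₂₂ + l·E₃₁ + ((l+β-1)/l)·E₃₂ + E₃₃ + E₄₂`. -/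
noncomputable def lMb (l β : ℝ) : Matrix (Fin 4) (Fin 4) ℝ :=
  !![0, 0, 0, 0;
     0, (l - β) / l, 0, 0;
     l, (l + β - 1) / l, 1, 0;
     0, 1, 0, 0]

/-- `M₀`: the 4×4 real matrices whose only possibly nonzero entries are at the
(1-indexed) positions (1,1), (2,1), (2,2), (3,1), (3,3), (4,1), (4,2), (4,3). -/
def Mset0 : Set (Matrix (Fin 4) (Fin 4) ℝ) :=
  {m | m 0 1 = 0 ∧ m 0 2 = 0 ∧ m 0 3 = 0 ∧ m 1 2 = 0 ∧ m 1 3 = 0 ∧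
       m 2 1 = 0 ∧ m 2 3 = 0 ∧ m 3 3 = 0}

/-- `Mset0` as a non-unital subalgebra. -/
def S15 : NonUnitalSubalgebra ℝ (Matrix (Fin 4) (Fin 4) ℝ) where
  carrier := Mset0
  add_mem' := by
    rintro x y ⟨h1,h2,h3,h4,h5,h6,h7,h8⟩ ⟨g1,g2,g3,g4,g5,g6,g7,g8⟩
    refine ⟨?_,?_,?_,?_,?_,?_,?_,?_⟩ <;> simp [Matrix.add_apply, *]
  zero_mem' := ⟨rfl, rfl, rfl, rfl, rfl, rfl, rfl, rfl⟩
  mul_mem' := by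
    rintro x y ⟨h1,h2,h3,h4,h5,h6,h7,h8⟩ ⟨g1,g2,g3,g4,g5,g6,g7,g8⟩
    refine ⟨?_,?_,?_,?_,?_,?_,?_,?_⟩ <;>
      simp [Matrix.mul_apply, Fin.sum_univ_four, *]
  smul_mem' := by
    rintro c x ⟨h1,h2,h3,h4,h5,h6,h7,h8⟩
    refine ⟨?_,?_,?_,?_,?_,?_,?_,?_⟩ <;> simp [Matrix.smul_apply, *]

section aux

noncomputable abbrev mo15 := lMo (1/2) (1/2)
noncomputable abbrev ma15 := lMa (1/2) (1/2)
noncomputable abbrev mb15 := lMb (1/2) (1/2)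

abbrev A15 := NonUnitalAlgebra.adjoin ℝ
  ({mo15, ma15, mb15} : Set (Matrix (Fin 4) (Fin 4) ℝ))

lemma ho15 : mo15 ∈ A15 := NonUnitalAlgebra.subset_adjoin ℝ (by simp)
lemma ha15 : ma15 ∈ A15 := NonUnitalAlgebra.subset_adjoin ℝ (by simp)
lemma hb15 : mb15 ∈ A15 := NonUnitalAlgebra.subset_adjoin ℝ (by simp)

noncomputable def sbm (i j : Fin 4) : Matrix (Fin 4) (Fin 4) ℝ :=
  Matrix.single i j 1

lemma he00 : sbm 0 0 ∈ A15 := by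
  have h : sbm 0 0 = (2:ℝ) • (mo15 * mo15) - mo15 := by
    ext i j; fin_cases i <;> fin_cases j <;>
      simp (config := { decide := true }) [sbm, lMo, Matrix.mul_apply,
        Fin.sum_univ_four, Matrix.single, Matrix.smul_apply,
        Matrix.sub_apply] <;> (try norm_num [Matrix.vecHead, Matrix.vecTail]) <;> (try rfl)
  rw [h]; exact sub_mem (SMulMemClass.smul_mem _ (mul_mem ho15 ho15)) ho15

lemma he10 : sbm 1 0 ∈ A15 := by
  have h : sbm 1 0 = (4:ℝ) • (ma15 * ma15 * mo15 - mo15 * (ma15 * ma15)) := by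
    ext i j; fin_cases i <;> fin_cases j <;>
      simp (config := { decide := true }) [sbm, lMo, lMa, Matrix.mul_apply,
        Fin.sum_univ_four, Matrix.single, Matrix.smul_apply,
        Matrix.sub_apply] <;> (try norm_num [Matrix.vecHead, Matrix.vecTail]) <;> (try rfl)
  rw [h]
  exact SMulMemClass.smul_mem _ (sub_mem (mul_mem (mul_mem ha15 ha15) ho15)
    (mul_mem ho15 (mul_mem ha15 ha15)))

lemma he11 : sbm 1 1 ∈ A15 := by
  have h : sbm 1 1 =
      ma15 * ma15 - (2:ℝ) • (ma15 * ma15 * mo15 - mo15 * (ma15 * ma15)) := by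
    ext i j; fin_cases i <;> fin_cases j <;>
      simp (config := { decide := true }) [sbm, lMo, lMa, Matrix.mul_apply,
        Fin.sum_univ_four, Matrix.single, Matrix.smul_apply,
        Matrix.sub_apply] <;> (try norm_num [Matrix.vecHead, Matrix.vecTail]) <;> (try rfl)
  rw [h]
  exact sub_mem (mul_mem ha15 ha15) (SMulMemClass.smul_mem _
    (sub_mem (mul_mem (mul_mem ha15 ha15) ho15) (mul_mem ho15 (mul_mem ha15 ha15))))

lemma he20 : sbm 2 0 ∈ A15 := by
  have h : sbm 2 0 = (4:ℝ) • (mb15 * mb15 * mo15 - mo15 * (mb15 * mb15)) := by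
    ext i j; fin_cases i <;> fin_cases j <;>
      simp (config := { decide := true }) [sbm, lMo, lMb, Matrix.mul_apply,
        Fin.sum_univ_four, Matrix.single, Matrix.smul_apply,
        Matrix.sub_apply] <;> (try norm_num [Matrix.vecHead, Matrix.vecTail]) <;> (try rfl)
  rw [h]
  exact SMulMemClass.smul_mem _ (sub_mem (mul_mem (mul_mem hb15 hb15) ho15)
    (mul_mem ho15 (mul_mem hb15 hb15)))

lemma he22 : sbm 2 2 ∈ A15 := by
  have h : sbm 2 2 =
      mb15 * mb15 - (2:ℝ) • (mb15 * mb15 * mo15 - mo15 * (mb15 * mb15)) := by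
    ext i j; fin_cases i <;> fin_cases j <;>
      simp (config := { decide := true }) [sbm, lMo, lMb, Matrix.mul_apply,
        Fin.sum_univ_four, Matrix.single, Matrix.smul_apply,
        Matrix.sub_apply] <;> (try norm_num [Matrix.vecHead, Matrix.vecTail]) <;> (try rfl)
  rw [h]
  exact sub_mem (mul_mem hb15 hb15) (SMulMemClass.smul_mem _
    (sub_mem (mul_mem (mul_mem hb15 hb15) ho15) (mul_mem ho15 (mul_mem hb15 hb15))))

lemma he32 : sbm 3 2 ∈ A15 := by
  have h : sbm 3 2 = ma15 - ma15 * ma15 := by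
    ext i j; fin_cases i <;> fin_cases j <;>
      simp (config := { decide := true }) [sbm, lMa, Matrix.mul_apply,
        Fin.sum_univ_four, Matrix.single,
        Matrix.sub_apply] <;> (try norm_num [Matrix.vecHead, Matrix.vecTail]) <;> (try rfl)
  rw [h]; exact sub_mem ha15 (mul_mem ha15 ha15)

lemma he31 : sbm 3 1 ∈ A15 := by
  have h : sbm 3 1 = mb15 - mb15 * mb15 := by
    ext i j; fin_cases i <;> fin_cases j <;>
      simp (config := { decide := true }) [sbm, lMb, Matrix.mul_apply,
        Fin.sum_univ_four, Matrix.single,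
        Matrix.sub_apply] <;> (try norm_num [Matrix.vecHead, Matrix.vecTail]) <;> (try rfl)
  rw [h]; exact sub_mem hb15 (mul_mem hb15 hb15)

lemma he30 : sbm 3 0 ∈ A15 := by
  have h : sbm 3 0 = sbm 3 2 * sbm 2 0 := by
    ext i j; fin_cases i <;> fin_cases j <;>
      simp (config := { decide := true }) [sbm, Matrix.mul_apply,
        Fin.sum_univ_four, Matrix.single] <;> (try norm_num [Matrix.vecHead, Matrix.vecTail]) <;> (try rfl)
  rw [h]; exact mul_mem he32 he20

end aux

set_option maxHeartbeats 1000000 in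
/-- If `l = β = 1/2`, the non-unital associative subalgebra of the 4×4 real matrices
generated by `{l_o, l_a, l_b}` equals `M₀`. -/
theorem stmt_15 :
    (NonUnitalAlgebra.adjoin ℝ
        ({lMo (1/2) (1/2), lMa (1/2) (1/2), lMb (1/2) (1/2)} :
          Set (Matrix (Fin 4) (Fin 4) ℝ)) : Set (Matrix (Fin 4) (Fin 4) ℝ)) = Mset0 := by
  apply Set.Subset.antisymm
  · have hle : A15 ≤ S15 := by
      apply NonUnitalAlgebra.adjoin_le
      rintro x (rfl | rfl | rfl)
      · refine ⟨?_,?_,?_,?_,?_,?_,?_,?_⟩ <;>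
          norm_num [lMo, Matrix.vecHead, Matrix.vecTail] <;> rfl
      · refine ⟨?_,?_,?_,?_,?_,?_,?_,?_⟩ <;>
          norm_num [lMa, Matrix.vecHead, Matrix.vecTail] <;> rfl
      · refine ⟨?_,?_,?_,?_,?_,?_,?_,?_⟩ <;>
          norm_num [lMb, Matrix.vecHead, Matrix.vecTail] <;> rfl
    exact fun x hx => hle hx
  · rintro x ⟨h1,h2,h3,h4,h5,h6,h7,h8⟩
    have hx : x = x 0 0 • sbm 0 0 + x 1 0 • sbm 1 0 + x 1 1 • sbm 1 1 +
        x 2 0 • sbm 2 0 + x 2 2 • sbm 2 2 + x 3 0 • sbm 3 0 +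
        x 3 1 • sbm 3 1 + x 3 2 • sbm 3 2 := by
      ext i j; fin_cases i <;> fin_cases j <;>
        simp [sbm, Matrix.single, Matrix.add_apply, Matrix.smul_apply,
          h1, h2, h3, h4, h5, h6, h7, h8]
    rw [hx]
    exact add_mem (add_mem (add_mem (add_mem (add_mem (add_mem (add_mem
      (SMulMemClass.smul_mem _ he00) (SMulMemClass.smul_mem _ he10))
      (SMulMemClass.smul_mem _ he11)) (SMulMemClass.smul_mem _ he20))
      (SMulMemClass.smul_mem _ he22)) (SMulMemClass.smul_mem _ he30))
      (SMulMemClass.smul_mem _ he31)) (SMulMemClass.smul_mem _ he32)
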